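/- Let X be a real-valued random variable with finite second moment, let a, b ∈ ℝ, and let β ∈ (0,1). If √((1−β)·a²·Var(X)) + √β·(a·E[X] + b) ≤ 0, then P(a·X + b ≤ 0) ≥ 1 − β. -/

import Mathlib

open MeasureTheory ProbabilityTheory

/-- **Cantelli's one-sided inequality**: for `t > 0`,
`P(Y - E[Y] ≥ t) ≤ Var(Y) / (Var(Y) + t²)`. -/
lemma cantelli_aux {Ω : Type*} [MeasurableSpace Ω] (μ : Measure Ω) [IsProbabilityMeasure μ]
    {Y : Ω → ℝ} (hY : MemLp Y 2 μ) {t : ℝ} (ht : 0 < t) :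
    (μ {ω | t ≤ Y ω - μ[Y]}).toReal ≤ variance Y μ / (variance Y μ + t ^ 2) := by
  set m := μ[Y] with hm
  set σ2 := variance Y μ with hσ2
  have hσ2nn : 0 ≤ σ2 := variance_nonneg Y μ
  set u := σ2 / t with hu
  have hunn : 0 ≤ u := div_nonneg hσ2nn ht.le
  have hYm : Integrable (fun ω => Y ω - m) μ :=
    (hY.integrable one_le_two).sub (integrable_const m)
  have hintYm : ∫ ω, (Y ω - m) ∂μ = 0 := by
    rw [integral_sub (hY.integrable one_le_two) (integrable_const m)]
    simp [hm]
  have hvar : ∫ ω, (Y ω - m) ^ 2 ∂μ = σ2 := by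
    rw [hσ2, variance_eq_integral hY.aestronglyMeasurable.aemeasurable]
  have hYmsq : Integrable (fun ω => (Y ω - m) ^ 2) μ := by
    have := (hY.sub (memLp_const m)).integrable_sq
    simpa using this
  have hZsq : Integrable (fun ω => (Y ω - m + u) ^ 2) μ := by
    have := ((hY.sub (memLp_const m)).add (memLp_const u)).integrable_sq
    simpa using this
  have hintZsq : ∫ ω, (Y ω - m + u) ^ 2 ∂μ = σ2 + u ^ 2 := by
    have hEq : (fun ω => (Y ω - m + u) ^ 2)
        = fun ω => (Y ω - m) ^ 2 + ((2 * u) * (Y ω - m) + u ^ 2) := by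
      funext ω; ring
    have hg : Integrable (fun ω => 2 * u * (Y ω - m) + u ^ 2) μ := by
      simpa using (hYm.const_mul (2 * u)).add (integrable_const (u ^ 2))
    rw [hEq, integral_add hYmsq hg,
      integral_add (hYm.const_mul (2 * u)) (integrable_const (u ^ 2)),
      integral_const_mul, hvar, hintYm]
    simp
  have hmarkov := mul_meas_ge_le_integral_of_nonneg (μ := μ)
    (ae_of_all _ fun ω => sq_nonneg (Y ω - m + u)) hZsq ((t + u) ^ 2)
  have hsub : {ω | t ≤ Y ω - m} ⊆ {ω | (t + u) ^ 2 ≤ (Y ω - m + u) ^ 2} := by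
    intro ω hω
    have h1 : t + u ≤ Y ω - m + u := add_le_add_left hω u
    exact pow_le_pow_left₀ (by positivity) h1 2
  have hmono : (μ {ω | t ≤ Y ω - m}).toReal
      ≤ (μ {ω | (t + u) ^ 2 ≤ (Y ω - m + u) ^ 2}).toReal :=
    ENNReal.toReal_mono (measure_ne_top _ _) (measure_mono hsub)
  have htu : (0 : ℝ) < (t + u) ^ 2 := by positivity
  have hkey : (t + u) ^ 2 * (μ {ω | t ≤ Y ω - m}).toReal ≤ σ2 + u ^ 2 := by
    calc (t + u) ^ 2 * (μ {ω | t ≤ Y ω - m}).toReal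
        ≤ (t + u) ^ 2 * (μ {ω | (t + u) ^ 2 ≤ (Y ω - m + u) ^ 2}).toReal := by
          exact mul_le_mul_of_nonneg_left hmono htu.le
      _ ≤ ∫ ω, (Y ω - m + u) ^ 2 ∂μ := hmarkov
      _ = σ2 + u ^ 2 := hintZsq
  have hkey2 : (μ {ω | t ≤ Y ω - m}).toReal ≤ (σ2 + u ^ 2) / (t + u) ^ 2 := by
    rw [le_div_iff₀ htu]
    linarith [hkey]
  have heq : (σ2 + u ^ 2) / (t + u) ^ 2 = σ2 / (σ2 + t ^ 2) := by
    have ht' : t ≠ 0 := ht.ne'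
    have hd : σ2 + t ^ 2 ≠ 0 := by positivity
    have htu' : t + u ≠ 0 := by positivity
    rw [hu]
    field_simp
    ring
  rw [heq] at hkey2
  exact hkey2

/-- Theorem (Chebyshev–Cantelli reformulation of an affine individual chance constraint):
if `X` has finite second moment and
`√((1-β)·a²·Var(X)) + √β·(a·E[X] + b) ≤ 0` with `β ∈ (0,1)`, then
`P(a·X + b ≤ 0) ≥ 1 - β`. -/
theorem affine_chance_constraint_of_mean_variance
    {Ω : Type*} [MeasurableSpace Ω] (μ : Measure Ω) [IsProbabilityMeasure μ]
    (X : Ω → ℝ) (hX : MemLp X 2 μ) (a b β : ℝ) (hβ : β ∈ Set.Ioo (0 : ℝ) 1)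
    (h : Real.sqrt ((1 - β) * a ^ 2 * variance X μ)
        + Real.sqrt β * (a * (∫ ω, X ω ∂μ) + b) ≤ 0) :
    1 - β ≤ (μ {ω | a * X ω + b ≤ 0}).toReal := by
  obtain ⟨hβ0, hβ1⟩ := hβ
  set Y : Ω → ℝ := fun ω => a * X ω + b with hYdef
  have hY : MemLp Y 2 μ := (hX.const_mul a).add (memLp_const b)
  have hXi : Integrable X μ := hX.integrable one_le_two
  have hmean : μ[Y] = a * μ[X] + b := by
    rw [hYdef]
    rw [integral_add (hXi.const_mul a) (integrable_const b), integral_const_mul]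
    simp
  have hvarY : variance Y μ = a ^ 2 * variance X μ := by
    have h1 : variance (fun ω => a * X ω) μ = a ^ 2 * variance X μ := variance_const_mul a X μ
    have h2 : μ[fun ω => a * X ω] = a * μ[X] := by rw [integral_const_mul]
    rw [← h1, variance, variance, evariance, evariance, hmean, h2]
    congr 1
    refine lintegral_congr fun ω => ?_
    have h3 : Y ω - (a * μ[X] + b) = a * X ω - a * μ[X] := by
      simp only [hYdef]; ring
    rw [h3]
  have h' : Real.sqrt ((1 - β) * variance Y μ) + Real.sqrt β * μ[Y] ≤ 0 := by
    rw [hvarY, hmean, ← mul_assoc]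
    exact h
  -- null measurability and complement computation
  have hns : NullMeasurableSet {ω | Y ω ≤ 0} μ :=
    hY.aestronglyMeasurable.aemeasurable.nullMeasurable measurableSet_Iic
  have hsum : (μ {ω | Y ω ≤ 0}).toReal + (μ {ω | 0 < Y ω}).toReal = 1 := by
    have hadd := measure_add_measure_compl₀ hns
    have hcompl : {ω | Y ω ≤ 0}ᶜ = {ω | 0 < Y ω} := by
      ext ω; simp [not_le]
    rw [hcompl] at hadd
    have := congrArg ENNReal.toReal hadd
    rwa [ENNReal.toReal_add (measure_ne_top _ _) (measure_ne_top _ _), measure_univ,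
      ENNReal.toReal_one] at this
  have hβsqrt : 0 < Real.sqrt β := Real.sqrt_pos.2 hβ0
  have hgoal : (μ {ω | 0 < Y ω}).toReal ≤ β := by
    have hσnn := variance_nonneg Y μ
    rcases eq_or_lt_of_le hσnn with hσ0 | hσpos
    · -- zero variance case: Y is a.e. equal to its (nonpositive) mean
      have hm : μ[Y] ≤ 0 := by
        nlinarith [Real.sqrt_nonneg ((1 - β) * variance Y μ)]
      have hae : Y =ᵐ[μ] fun _ => μ[Y] := by
        rw [← evariance_eq_zero_iff hY.aestronglyMeasurable.aemeasurable]
        rw [← hY.ofReal_variance_eq, ← hσ0]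
        simp
      have hle : ∀ᵐ ω ∂μ, Y ω ≤ 0 := hae.mono fun ω hω => hω ▸ hm
      have h0 : μ {ω | 0 < Y ω} = 0 := by
        have := hle
        rw [MeasureTheory.ae_iff] at this
        convert this using 2
        ext ω; simp [not_le]
      rw [h0]
      simpa using hβ0.le
    · -- positive variance case: apply Cantelli's inequality
      have hsq : 0 < Real.sqrt ((1 - β) * variance Y μ) :=
        Real.sqrt_pos.2 (mul_pos (by linarith) hσpos)
      have hmneg : μ[Y] < 0 := by nlinarith
      set t := -μ[Y] with htdef
      have ht : 0 < t := by rw [htdef]; linarith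
      have hsubset : {ω | 0 < Y ω} ⊆ {ω | t ≤ Y ω - μ[Y]} := by
        intro ω hω
        have hω' : 0 < Y ω := hω
        show t ≤ Y ω - μ[Y]
        rw [htdef]
        linarith
      have hmono : (μ {ω | 0 < Y ω}).toReal ≤ (μ {ω | t ≤ Y ω - μ[Y]}).toReal :=
        ENNReal.toReal_mono (measure_ne_top _ _) (measure_mono hsubset)
      have hcant := cantelli_aux μ hY ht
      have h2 : Real.sqrt ((1 - β) * variance Y μ) ≤ Real.sqrt β * t := by
        simp only [htdef]
        linarith
      have h3 : (1 - β) * variance Y μ ≤ β * t ^ 2 := by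
        have hsq1 := Real.sq_sqrt (show (0 : ℝ) ≤ (1 - β) * variance Y μ by
          exact mul_nonneg (by linarith) hσnn)
        have hsq2 : (Real.sqrt β * t) ^ 2 = β * t ^ 2 := by
          rw [mul_pow, Real.sq_sqrt hβ0.le]
        nlinarith [Real.sqrt_nonneg ((1 - β) * variance Y μ)]
      have h4 : variance Y μ / (variance Y μ + t ^ 2) ≤ β := by
        rw [div_le_iff₀ (by positivity)]
        nlinarith
      linarith
  linarith
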